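/- Fix real numbers p₀, p₁, p₂, p₃ and let Q_k ∈ ℝ[c] be defined by Q_0 = p₀, Q_1 = p₁, Q_2 = p₂, Q_3 = p₃ and (2k−2)·Q_k = 4(k−4)·c·Q_{k−2} − 2(k−7)·Q_{k−4} for k ≥ 4. Then the formal power series F(z) = Σ_{k≥0} Q_k z^k, with coefficients in the polynomial ring ℝ[c], satisfies the differential equation (z⁵ − 2c z³ + z)·(dF/dz) − (3z⁴ − 4c z² + 1)·F = 2(p₃ + c·p₁) z³ + p₂ z² + (4c z² − 1)·p₀, where dF/dz is the formal derivative of power series in z. -/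

import Mathlib

open Polynomial PowerSeries

/-- with `Q_k ∈ ℝ[c]` given by `Q₀ = p₀, Q₁ = p₁, Q₂ = p₂, Q₃ = p₃` and
`(2k−2)Q_k = 4(k−4)cQ_{k−2} − 2(k−7)Q_{k−4}` for `k ≥ 4`, the formal power series
`F(z) = Σ_{k≥0} Q_k z^k` over `ℝ[c]` satisfies
`(z⁵ − 2cz³ + z)F' − (3z⁴ − 4cz² + 1)F = 2(p₃ + cp₁)z³ + p₂z² + (4cz² − 1)p₀`. -/
theorem stmt_2 (p₀ p₁ p₂ p₃ : ℝ) (Q : ℕ → Polynomial ℝ)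
    (h0 : Q 0 = Polynomial.C p₀) (h1 : Q 1 = Polynomial.C p₁)
    (h2 : Q 2 = Polynomial.C p₂) (h3 : Q 3 = Polynomial.C p₃)
    (hrec : ∀ k : ℕ, 4 ≤ k →
      Polynomial.C (2 * (k : ℝ) - 2) * Q k =
        Polynomial.C (4 * ((k : ℝ) - 4)) * Polynomial.X * Q (k - 2)
          - Polynomial.C (2 * ((k : ℝ) - 7)) * Q (k - 4)) :
    (PowerSeries.X ^ 5
        - 2 * PowerSeries.C (R := Polynomial ℝ) Polynomial.X * PowerSeries.X ^ 3
        + PowerSeries.X) * (d⁄dX (Polynomial ℝ) (PowerSeries.mk fun k => Q k))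
      - (3 * PowerSeries.X ^ 4
          - 4 * PowerSeries.C (R := Polynomial ℝ) Polynomial.X * PowerSeries.X ^ 2
          + 1) * (PowerSeries.mk fun k => Q k)
    = 2 * (PowerSeries.C (R := Polynomial ℝ) (Polynomial.C p₃)
          + PowerSeries.C (R := Polynomial ℝ) Polynomial.X *
              PowerSeries.C (R := Polynomial ℝ) (Polynomial.C p₁)) * PowerSeries.X ^ 3
      + PowerSeries.C (R := Polynomial ℝ) (Polynomial.C p₂) * PowerSeries.X ^ 2
      + (4 * PowerSeries.C (R := Polynomial ℝ) Polynomial.X * PowerSeries.X ^ 2 - 1) *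
          PowerSeries.C (R := Polynomial ℝ) (Polynomial.C p₀) := by
  rw [show (2:(Polynomial ℝ)⟦X⟧) = PowerSeries.C (R := Polynomial ℝ) 2 from (map_ofNat _ 2).symm,
      show (3:(Polynomial ℝ)⟦X⟧) = PowerSeries.C (R := Polynomial ℝ) 3 from (map_ofNat _ 3).symm,
      show (4:(Polynomial ℝ)⟦X⟧) = PowerSeries.C (R := Polynomial ℝ) 4 from (map_ofNat _ 4).symm,
      show (PowerSeries.X : (Polynomial ℝ)⟦X⟧) = PowerSeries.X ^ 1 from (pow_one _).symm]
  refine PowerSeries.ext fun n => ?_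
  match n with
  | 0 =>
    simp [sub_mul, add_mul, PowerSeries.coeff_C_mul, PowerSeries.coeff_X_pow_mul', PowerSeries.coeff_X_pow,
      PowerSeries.coeff_derivative, mul_assoc, h0]
  | 1 =>
    simp [sub_mul, add_mul, PowerSeries.coeff_C_mul, PowerSeries.coeff_X_pow_mul', PowerSeries.coeff_X_pow,
      PowerSeries.coeff_derivative, mul_assoc]
  | 2 =>
    simp [sub_mul, add_mul, PowerSeries.coeff_C_mul, PowerSeries.coeff_X_pow_mul', PowerSeries.coeff_X_pow,
      PowerSeries.coeff_derivative, mul_assoc, h0, h2]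
    ring
  | 3 =>
    simp [sub_mul, add_mul, PowerSeries.coeff_C_mul, PowerSeries.coeff_X_pow_mul', PowerSeries.coeff_X_pow,
      PowerSeries.coeff_derivative, mul_assoc, h1, h3]
    ring
  | 4 =>
    have := hrec 4 (by norm_num)
    simp only [show (4:ℕ)-2=2 from rfl, show (4:ℕ)-4=0 from rfl] at this
    simp [sub_mul, add_mul, PowerSeries.coeff_C_mul, PowerSeries.coeff_X_pow_mul', PowerSeries.coeff_X_pow,
      PowerSeries.coeff_derivative, mul_assoc]
    simp only [map_sub, map_mul, map_add, map_natCast, map_ofNat, map_one] at this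
    push_cast at this ⊢
    refine mul_left_cancel₀ (a := (2 : Polynomial ℝ)) (by norm_num) ?_
    linear_combination this
  | (n+5) =>
    have := hrec (n+5) (by omega)
    simp only [show (n+5)-2=n+3 from rfl, show (n+5)-4=n+1 from rfl] at this
    simp [sub_mul, add_mul, PowerSeries.coeff_C_mul, PowerSeries.coeff_X_pow_mul', PowerSeries.coeff_X_pow,
      PowerSeries.coeff_derivative, mul_assoc,
      show n+5-5=n from rfl, show n+5-3=n+2 from rfl, show n+5-4=n+1 from rfl,
      show n+5-2=n+3 from rfl, show n+5-1=n+4 from rfl,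
      show 5 ≤ n+5 from by omega, show 3 ≤ n+5 from by omega, show 4 ≤ n+5 from by omega,
      show 2 ≤ n+5 from by omega, show 1 ≤ n+5 from by omega]
    simp only [map_sub, map_mul, map_add, map_natCast, map_ofNat, map_one] at this
    push_cast at this ⊢
    refine mul_left_cancel₀ (a := (2 : Polynomial ℝ)) (by norm_num) ?_
    linear_combination this
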